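/- Let 0 < η < 1, 0 < θ ≤ 1, and let ω : (0,1] → [0,∞) be nondecreasing with ∫_0^1 ω(ρ)/ρ dρ < ∞. Define A_0 = A_{−1} = 1 and A_m = max(ω(η^m), η^θ·A_{m−1}) for m ≥ 1. Then Σ_{m=0}^∞ A_m < ∞, A_m → 0 as m → ∞, and for every m ≥ 1, Σ_{i=m}^∞ A_i ≤ (1/((1−η^θ)(1−η)))·(∫_0^{η^{m−1}} ω(ρ)/ρ dρ + A_{m−1}). -/

import Mathlib

open MeasureTheory Filter

/-- Tail-sum estimate for the Dini recursion: with `A_0 = 1`,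
`A_m = max(ω(η^m), η^θ A_{m−1})`, the series `Σ A_m` converges, `A_m → 0`, and for `m ≥ 1`,
`Σ_{i=m}^∞ A_i ≤ (1/((1−η^θ)(1−η))) (∫_0^{η^{m−1}} ω(ρ)/ρ dρ + A_{m−1})`. -/
theorem dini_recursion_tail_sum (η θ : ℝ)
    (hη : 0 < η) (hη1 : η < 1) (hθ : 0 < θ) (hθ1 : θ ≤ 1)
    (ω : ℝ → ℝ)
    (hωnn : ∀ r : ℝ, 0 < r → r ≤ 1 → 0 ≤ ω r)
    (hωmono : ∀ r s : ℝ, 0 < r → r ≤ s → s ≤ 1 → ω r ≤ ω s)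
    (hωdini : IntegrableOn (fun ρ : ℝ => ω ρ / ρ) (Set.Ioc 0 1))
    (A : ℕ → ℝ) (hA0 : A 0 = 1)
    (hA : ∀ m : ℕ, 1 ≤ m → A m = max (ω (η ^ m)) (η ^ θ * A (m - 1))) :
    Summable A ∧ Tendsto A atTop (nhds 0) ∧
    ∀ m : ℕ, 1 ≤ m →
      (∑' i : ℕ, A (m + i)) ≤
        (1 / ((1 - η ^ θ) * (1 - η))) *
          ((∫ ρ in Set.Ioc (0 : ℝ) (η ^ (m - 1)), ω ρ / ρ) + A (m - 1)) := by
  set q : ℝ := η ^ θ with hq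
  have hq0 : 0 < q := Real.rpow_pos_of_pos hη θ
  have hq1 : q < 1 := Real.rpow_lt_one hη.le hη1 hθ
  have hωnn' : ∀ j : ℕ, 0 ≤ ω (η ^ j) := fun j =>
    hωnn _ (pow_pos hη j) (pow_le_one₀ hη.le hη1.le)
  have hAnn : ∀ m : ℕ, 0 ≤ A m := by
    intro m
    cases m with
    | zero => rw [hA0]; norm_num
    | succ n =>
      rw [hA (n + 1) (by omega)]
      exact le_trans (hωnn' (n + 1)) (le_max_left _ _)
  have hAstep : ∀ n : ℕ, A (n + 1) ≤ ω (η ^ (n + 1)) + q * A n := by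
    intro n
    rw [hA (n + 1) (by omega)]
    simp only [Nat.add_sub_cancel]
    exact max_le (le_add_of_nonneg_right (mul_nonneg hq0.le (hAnn n)))
      (le_add_of_nonneg_left (hωnn' (n + 1)))
  -- partial sum recursion
  have hT : ∀ k n : ℕ,
      (∑ i ∈ Finset.range (n + 1), A (k + 1 + i)) ≤
        (∑ i ∈ Finset.range (n + 1), ω (η ^ (k + 1 + i))) +
          q * (A k + ∑ i ∈ Finset.range n, A (k + 1 + i)) := by
    intro k n
    induction n with
    | zero => simpa using hAstep k
    | succ n ih =>
      rw [Finset.sum_range_succ (fun i => A (k + 1 + i)) (n + 1),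
        Finset.sum_range_succ (fun i => ω (η ^ (k + 1 + i))) (n + 1),
        Finset.sum_range_succ (fun i => A (k + 1 + i)) n]
      have h1 : A (k + 1 + (n + 1)) ≤ ω (η ^ (k + 1 + (n + 1))) + q * A (k + 1 + n) :=
        hAstep (k + 1 + n)
      rw [Finset.sum_range_succ (fun i => A (k + 1 + i)) n] at ih
      linarith
  have hTb : ∀ k n : ℕ,
      (1 - q) * (∑ i ∈ Finset.range n, A (k + 1 + i)) ≤
        (∑ i ∈ Finset.range n, ω (η ^ (k + 1 + i))) + q * A k := by
    intro k n
    cases n with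
    | zero => simpa using mul_nonneg hq0.le (hAnn k)
    | succ n =>
      have h1 := hT k n
      have h2 : (∑ i ∈ Finset.range n, A (k + 1 + i)) ≤
          ∑ i ∈ Finset.range (n + 1), A (k + 1 + i) := by
        rw [Finset.sum_range_succ]
        exact le_add_of_nonneg_right (hAnn _)
      nlinarith
  -- integral estimates
  have hint : ∀ j : ℕ, ω (η ^ (j + 1)) * (1 - η) ≤
      ∫ ρ in Set.Ioc (η ^ (j + 1)) (η ^ j), ω ρ / ρ := by
    intro j
    set a := η ^ (j + 1) with ha
    set b := η ^ j with hb
    have ha0 : 0 < a := pow_pos hη _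
    have hb0 : 0 < b := pow_pos hη _
    have hab : a ≤ b := by
      rw [ha, hb, pow_succ]
      nlinarith [pow_pos hη j]
    have hb1 : b ≤ 1 := pow_le_one₀ hη.le hη1.le
    have hInt : IntegrableOn (fun ρ : ℝ => ω ρ / ρ) (Set.Ioc a b) :=
      hωdini.mono_set (Set.Ioc_subset_Ioc ha0.le hb1)
    have hconst : (∫ ρ in Set.Ioc a b, ω a / b) ≤ ∫ ρ in Set.Ioc a b, ω ρ / ρ := by
      apply setIntegral_mono_on (integrableOn_const (by
        rw [Real.volume_Ioc]; exact ENNReal.ofReal_ne_top)) hInt measurableSet_Ioc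
      intro x hx
      obtain ⟨hx1, hx2⟩ := hx
      have hx0 : 0 < x := lt_trans ha0 hx1
      have h1 : ω a ≤ ω x := hωmono a x ha0 hx1.le (le_trans hx2 hb1)
      exact div_le_div₀ (hωnn x hx0 (le_trans hx2 hb1)) h1 hx0 hx2
    have hval : (∫ ρ in Set.Ioc a b, (ω a / b : ℝ)) = ω a * (1 - η) := by
      rw [setIntegral_const, measureReal_def, Real.volume_Ioc, ENNReal.toReal_ofReal (by linarith)]
      have hba : b - a = b * (1 - η) := by rw [ha, hb, pow_succ]; ring
      rw [smul_eq_mul, hba]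
      field_simp
    calc ω a * (1 - η) = ∫ ρ in Set.Ioc a b, (ω a / b : ℝ) := hval.symm
      _ ≤ _ := hconst
  have hIntOn : ∀ a b : ℝ, 0 < a → b ≤ 1 →
      IntegrableOn (fun ρ : ℝ => ω ρ / ρ) (Set.Ioc a b) := fun a b h1 h2 =>
    hωdini.mono_set (Set.Ioc_subset_Ioc h1.le h2)
  have hW : ∀ k n : ℕ,
      (∑ i ∈ Finset.range n, ω (η ^ (k + 1 + i))) * (1 - η) ≤
        ∫ ρ in Set.Ioc (η ^ (k + n)) (η ^ k), ω ρ / ρ := by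
    intro k n
    induction n with
    | zero =>
      simp
    | succ n ih =>
      rw [show k + (n + 1) = k + n + 1 from by omega]
      have hU : Set.Ioc (η ^ (k + n + 1)) (η ^ (k + n)) ∪ Set.Ioc (η ^ (k + n)) (η ^ k)
          = Set.Ioc (η ^ (k + n + 1)) (η ^ k) := by
        apply Set.Ioc_union_Ioc_eq_Ioc
        · exact pow_le_pow_of_le_one hη.le hη1.le (by omega)
        · exact pow_le_pow_of_le_one hη.le hη1.le (by omega)
      have hdisj : Disjoint (Set.Ioc (η ^ (k + n + 1)) (η ^ (k + n)))
          (Set.Ioc (η ^ (k + n)) (η ^ k)) := by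
        rw [Set.Ioc_disjoint_Ioc]
        exact le_trans inf_le_left le_sup_right
      have hsplit := setIntegral_union hdisj measurableSet_Ioc
        (hIntOn _ _ (pow_pos hη _) (pow_le_one₀ hη.le hη1.le))
        (hIntOn _ _ (pow_pos hη _) (pow_le_one₀ hη.le hη1.le))
        (f := fun ρ : ℝ => ω ρ / ρ) (μ := volume)
      rw [Finset.sum_range_succ, add_mul, ← hU, hsplit,
        show k + 1 + n = k + n + 1 from by omega]
      have h2 := hint (k + n)
      linarith
  have hWI : ∀ k n : ℕ,
      (∑ i ∈ Finset.range n, ω (η ^ (k + 1 + i))) * (1 - η) ≤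
        ∫ ρ in Set.Ioc (0 : ℝ) (η ^ k), ω ρ / ρ := by
    intro k n
    refine le_trans (hW k n) (setIntegral_mono_set
      (hωdini.mono_set (Set.Ioc_subset_Ioc le_rfl (pow_le_one₀ hη.le hη1.le)))
      ?_ ?_)
    · filter_upwards [ae_restrict_mem measurableSet_Ioc] with x hx
      exact div_nonneg (hωnn x hx.1 (le_trans hx.2 (pow_le_one₀ hη.le hη1.le))) (le_of_lt hx.1)
    · exact (Set.Ioc_subset_Ioc (pow_pos hη _).le le_rfl).eventuallyLE
  -- combine: uniform bound on partial sums of the tail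
  have hmain : ∀ k n : ℕ,
      (∑ i ∈ Finset.range n, A (k + 1 + i)) ≤
        (1 / ((1 - q) * (1 - η))) *
          ((∫ ρ in Set.Ioc (0 : ℝ) (η ^ k), ω ρ / ρ) + A k) := by
    intro k n
    have hI0 : 0 ≤ ∫ ρ in Set.Ioc (0 : ℝ) (η ^ k), ω ρ / ρ := by
      apply setIntegral_nonneg measurableSet_Ioc
      intro x hx
      exact div_nonneg (hωnn x hx.1 (le_trans hx.2 (pow_le_one₀ hη.le hη1.le))) hx.1.le
    have h1 := hTb k n
    have h2 := hWI k n
    have hWnn : 0 ≤ ∑ i ∈ Finset.range n, ω (η ^ (k + 1 + i)) :=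
      Finset.sum_nonneg fun i _ => hωnn' _
    have hAk := hAnn k
    rw [div_mul_eq_mul_div, one_mul, le_div_iff₀ (by nlinarith)]
    have h3 := mul_le_mul_of_nonneg_right h1 (by linarith : (0:ℝ) ≤ 1 - η)
    have h4 : 0 ≤ A k * (1 - q * (1 - η)) :=
      mul_nonneg hAk (by nlinarith)
    nlinarith
  have hsumA : Summable A := by
    apply summable_of_sum_range_le hAnn
      (c := 1 + (1 / ((1 - q) * (1 - η))) *
        ((∫ ρ in Set.Ioc (0 : ℝ) (η ^ (0:ℕ)), ω ρ / ρ) + A 0))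
    intro n
    have hc0 : 0 ≤ (1 / ((1 - q) * (1 - η))) *
        ((∫ ρ in Set.Ioc (0 : ℝ) (η ^ (0:ℕ)), ω ρ / ρ) + A 0) := by
      simpa using hmain 0 0
    cases n with
    | zero =>
      rw [Finset.sum_range_zero]
      linarith
    | succ n =>
      rw [Finset.sum_range_succ']
      have h1 : (∑ i ∈ Finset.range n, A (i + 1)) ≤ (1 / ((1 - q) * (1 - η))) *
          ((∫ ρ in Set.Ioc (0 : ℝ) (η ^ (0:ℕ)), ω ρ / ρ) + A 0) := by
        refine le_trans (le_of_eq (Finset.sum_congr rfl fun i _ => ?_)) (hmain 0 n)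
        rw [show i + 1 = 0 + 1 + i from by omega]
      rw [hA0] at h1 ⊢
      linarith
  refine ⟨hsumA, hsumA.tendsto_atTop_zero, ?_⟩
  intro m hm
  obtain ⟨k, rfl⟩ : ∃ k, m = k + 1 := ⟨m - 1, by omega⟩
  simp only [Nat.add_sub_cancel]
  have hsum' : Summable (fun i => A (k + 1 + i)) :=
    ((summable_nat_add_iff (k + 1)).2 hsumA).congr fun n => by rw [Nat.add_comm]
  exact Summable.tsum_le_of_sum_range_le hsum' (hmain k)
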